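/- There exists an absolute constant C > 0 such that for every probability distribution J on [0,1] × {0,1}, every valid post-processing class K, and every interval I ⊆ [0,1] (open, closed, half-open, or a singleton): | E_{(p,y)~J}[ 1[p ∈ I]·(y − p) ] | ≤ C·√(CDL_K(J)). -/

import Mathlib

open MeasureTheory Set

noncomputable section

/-- Expected loss of prediction `p` when the outcome is `y ~ Bernoulli(q)`:
`ℓ(p,q) = q·ℓ(p,1) + (1−q)·ℓ(p,0)`. -/
def elos (ℓ : ℝ → ℝ → ℝ) (p q : ℝ) : ℝ := q * ℓ p 1 + (1 - q) * ℓ p 0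

/-- A loss is proper if truthful prediction minimizes expected loss. -/
def IsProper (ℓ : ℝ → ℝ → ℝ) : Prop :=
  ∀ p ∈ Icc (0:ℝ) 1, ∀ q ∈ Icc (0:ℝ) 1, elos ℓ q q ≤ elos ℓ p q

/-- The class `L*` of proper losses with `|ℓ(p,1) − ℓ(p,0)| ≤ 1`. -/
def Lstar (ℓ : ℝ → ℝ → ℝ) : Prop :=
  IsProper ℓ ∧ ∀ p ∈ Icc (0:ℝ) 1, |ℓ p 1 - ℓ p 0| ≤ 1

/-- Projection onto `[0,1]`. -/
def proj01 (x : ℝ) : ℝ := max 0 (min 1 x)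

/-- Calibration decision loss of `J` relative to the post-processing class `K`:
`sup` over `ℓ ∈ L*` and `κ ∈ K` of `E[ℓ(p,y) − ℓ(κ(p),y)]`. -/
def CDL (K : Set (ℝ → ℝ)) (J : Measure (ℝ × ℝ)) : ℝ :=
  sSup { x | ∃ ℓ κ, Lstar ℓ ∧ κ ∈ K ∧
    x = ∫ z, (ℓ z.1 z.2 - ℓ (κ z.1) z.2) ∂J }

/-- `sign_s(t)`: `+1` if `t > 0`, `−1` if `t < 0`, and `s` if `t = 0`. -/
def signS (s t : ℝ) : ℝ := if 0 < t then 1 else if t < 0 then -1 else s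

/-- `sign₊ = sign_{+1}`. -/
def signP (t : ℝ) : ℝ := signS 1 t

/-- The V-shaped loss `ℓ_{v,s}(p,y) = −sign_s(p−v)·(y−v)`. -/
def vloss (v s : ℝ) : ℝ → ℝ → ℝ := fun p y => -(signS s (p - v)) * (y - v)

/-- A valid post-processing class: maps `[0,1]` to `[0,1]`, contains the identity, and
is translation invariant. -/
def ValidClass (K : Set (ℝ → ℝ)) : Prop :=
  (∀ κ ∈ K, ∀ p ∈ Icc (0:ℝ) 1, κ p ∈ Icc (0:ℝ) 1) ∧
  ((fun p : ℝ => p) ∈ K) ∧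
  (∀ s t : ℝ, ∀ κ ∈ K, (fun p : ℝ => proj01 (κ (proj01 (p + s)) + t)) ∈ K)

/-- Upper thresholds of a post-processing class. -/
def thr (K : Set (ℝ → ℝ)) : Set (ℝ → ℝ) :=
  { w | ∃ κ ∈ K, w = fun p => signP (κ p - 1/2) }

/-- Modified thresholds: `thr(K)` together with all lower thresholds of the identity. -/
def thr' (K : Set (ℝ → ℝ)) : Set (ℝ → ℝ) :=
  thr K ∪ { w | ∃ v : ℝ, w = fun p => -signP (p - v) }

/-- Weight-restricted calibration error `CE_W(J) = sup_{w ∈ W} E[w(p)(y − p)]`. -/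
def CE (W : Set (ℝ → ℝ)) (J : Measure (ℝ × ℝ)) : ℝ :=
  sSup { x | ∃ w ∈ W, x = ∫ z, w z.1 * (z.2 - z.1) ∂J }

/-- A probability distribution on `[0,1] × {0,1}`. -/
def IsPredDist (J : Measure (ℝ × ℝ)) : Prop :=
  IsProbabilityMeasure J ∧ ∀ᵐ z ∂J, z.1 ∈ Icc (0:ℝ) 1 ∧ (z.2 = 0 ∨ z.2 = 1)

/-- The class `M₊` of nondecreasing post-processings `[0,1] → [0,1]`. -/
def Mplus : Set (ℝ → ℝ) :=
  { κ | (∀ p ∈ Icc (0:ℝ) 1, κ p ∈ Icc (0:ℝ) 1) ∧ MonotoneOn κ (Icc (0:ℝ) 1) }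

-- ================= auxiliary development =================
open Filter Topology

namespace IntervalCEAux

variable {J : Measure (ℝ × ℝ)} {K : Set (ℝ → ℝ)}

lemma proj01_of_mem {p : ℝ} (hp : p ∈ Icc (0:ℝ) 1) : proj01 p = p := by
  unfold proj01
  rw [min_eq_right hp.2, max_eq_right hp.1]

lemma signS_pos (s : ℝ) {x : ℝ} (h : 0 < x) : signS s x = 1 := by
  unfold signS; rw [if_pos h]

lemma signS_nonpos_neg1 {x : ℝ} (h : x ≤ 0) : signS (-1) x = -1 := by
  unfold signS; rw [if_neg (by linarith)]; split_ifs <;> rfl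

lemma signS_neg (s : ℝ) {x : ℝ} (h : x < 0) : signS s x = -1 := by
  unfold signS; rw [if_neg (by linarith), if_pos h]

lemma signS_nonneg_pos1 {x : ℝ} (h : 0 ≤ x) : signS 1 x = 1 := by
  unfold signS; split_ifs with h1 h2 <;> [rfl; linarith; rfl]

lemma abs_signS {s : ℝ} (hs : s = 1 ∨ s = -1) (t : ℝ) : |signS s t| ≤ 1 := by
  unfold signS
  rcases hs with rfl | rfl <;> split_ifs <;> norm_num

lemma lstar_vloss (v : ℝ) {s : ℝ} (hs : s = 1 ∨ s = -1) : Lstar (vloss v s) := by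
  constructor
  · intro p _ q _
    simp only [elos, vloss]
    have e : ∀ g : ℝ, q * (-g * (1 - v)) + (1 - q) * (-g * (0 - v)) = -g * (q - v) := by
      intro g; ring
    rw [e, e]
    have hgq : -signS s (q - v) * (q - v) = -|q - v| := by
      rcases lt_trichotomy (q - v) 0 with h | h | h
      · rw [signS_neg s h, abs_of_neg h]; ring
      · rw [h, abs_zero]; ring
      · rw [signS_pos s h, abs_of_pos h]; ring
    have h1 : |signS s (p - v)| ≤ 1 := abs_signS hs _
    have h2 : |signS s (p - v) * (q - v)| ≤ |q - v| := by
      rw [abs_mul]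
      calc |signS s (p - v)| * |q - v| ≤ 1 * |q - v| :=
            mul_le_mul_of_nonneg_right h1 (abs_nonneg _)
        _ = |q - v| := one_mul _
    have h3 : -(signS s (p - v) * (q - v)) ≥ -|q - v| := by
      have := neg_abs_le (signS s (p - v) * (q - v))
      linarith [abs_le.mp h2]
    rw [hgq]
    linarith
  · intro p _
    simp only [vloss]
    have : -signS s (p - v) * (1 - v) - -signS s (p - v) * (0 - v) = -signS s (p - v) := by ring
    rw [this, abs_neg]
    exact abs_signS hs _


lemma ae_mem (hJ : IsPredDist J) :
    ∀ᵐ z ∂J, z.1 ∈ Icc (0:ℝ) 1 ∧ z.2 ∈ Icc (0:ℝ) 1 := by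
  filter_upwards [hJ.2] with z hz
  refine ⟨hz.1, ?_⟩
  rcases hz.2 with h | h <;> rw [h] <;> constructor <;> norm_num

lemma meas_ind {B : Set ℝ} (hB : MeasurableSet B) :
    Measurable (fun z : ℝ × ℝ => B.indicator (fun _ => (1:ℝ)) z.1) :=
  (measurable_const.indicator hB).comp measurable_fst

lemma abs_ind_le {B : Set ℝ} (x : ℝ) : |B.indicator (fun _ => (1:ℝ)) x| ≤ 1 := by
  by_cases h : x ∈ B <;> simp [Set.indicator_apply, h]

lemma ind_nonneg {B : Set ℝ} (x : ℝ) : 0 ≤ B.indicator (fun _ => (1:ℝ)) x := by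
  by_cases h : x ∈ B <;> simp [Set.indicator_apply, h]

lemma integrable_ind_bd (hJ : IsPredDist J) {B : Set ℝ} (hB : MeasurableSet B)
    {g : ℝ × ℝ → ℝ} (hg : Measurable g) (hbd : ∀ᵐ z ∂J, |g z| ≤ 1) :
    Integrable (fun z : ℝ × ℝ => B.indicator (fun _ => (1:ℝ)) z.1 * g z) J := by
  haveI := hJ.1
  refine Integrable.mono' (integrable_const 1) ((meas_ind hB).mul hg).aestronglyMeasurable ?_
  filter_upwards [hbd] with z hz
  rw [Real.norm_eq_abs, abs_mul]
  exact mul_le_one₀ (abs_ind_le _) (abs_nonneg _) hz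

lemma integrable_ind (hJ : IsPredDist J) {B : Set ℝ} (hB : MeasurableSet B) :
    Integrable (fun z : ℝ × ℝ => B.indicator (fun _ => (1:ℝ)) z.1) J := by
  have := integrable_ind_bd hJ hB (g := fun _ => (1:ℝ)) measurable_const
    (by filter_upwards with z; norm_num)
  simpa using this

lemma integrable_ind_sub (hJ : IsPredDist J) {B : Set ℝ} (hB : MeasurableSet B) :
    Integrable (fun z : ℝ × ℝ => B.indicator (fun _ => (1:ℝ)) z.1 * (z.2 - z.1)) J := by
  refine integrable_ind_bd hJ hB (measurable_snd.sub measurable_fst) ?_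
  filter_upwards [ae_mem hJ] with z hz
  rw [abs_le]; constructor <;> linarith [hz.1.1, hz.1.2, hz.2.1, hz.2.2]

lemma integrable_ind_sub_const (hJ : IsPredDist J) {B : Set ℝ} (hB : MeasurableSet B)
    {c : ℝ} (hc : c ∈ Icc (0:ℝ) 1) :
    Integrable (fun z : ℝ × ℝ => B.indicator (fun _ => (1:ℝ)) z.1 * (z.2 - c)) J := by
  refine integrable_ind_bd hJ hB (measurable_snd.sub measurable_const) ?_
  filter_upwards [ae_mem hJ] with z hz
  rw [abs_le]; constructor <;> linarith [hz.2.1, hz.2.2, hc.1, hc.2]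

lemma integrable_ind_const_sub (hJ : IsPredDist J) {B : Set ℝ} (hB : MeasurableSet B)
    {c : ℝ} (hc : c ∈ Icc (0:ℝ) 1) :
    Integrable (fun z : ℝ × ℝ => B.indicator (fun _ => (1:ℝ)) z.1 * (c - z.1)) J := by
  refine integrable_ind_bd hJ hB (measurable_const.sub measurable_fst) ?_
  filter_upwards [ae_mem hJ] with z hz
  rw [abs_le]; constructor <;> linarith [hz.1.1, hz.1.2, hc.1, hc.2]

-- ===== CDL basics =====

lemma two_ub (hJ : IsPredDist J) (hK : ValidClass K) :
    ∀ x ∈ { x | ∃ ℓ κ, Lstar ℓ ∧ κ ∈ K ∧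
      x = ∫ z, (ℓ z.1 z.2 - ℓ (κ z.1) z.2) ∂J }, x ≤ 2 := by
  haveI := hJ.1
  rintro x ⟨ℓ, κ, hL, hκ, rfl⟩
  by_cases hint : Integrable (fun z : ℝ × ℝ => ℓ z.1 z.2 - ℓ (κ z.1) z.2) J
  · have hb : ∀ᵐ z ∂J, ℓ z.1 z.2 - ℓ (κ z.1) z.2 ≤ 2 := by
      filter_upwards [hJ.2] with z hz
      obtain ⟨hp, hy⟩ := hz
      have hyI : z.2 ∈ Icc (0:ℝ) 1 := by rcases hy with h | h <;> rw [h] <;> constructor <;> norm_num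
      have hκp := hK.1 κ hκ z.1 hp
      have e1 : ∀ r : ℝ, ℓ r z.2 = elos ℓ r z.2 := by
        intro r; rcases hy with h | h <;> rw [h] <;> simp [elos]
      rw [e1, e1]
      have h1 : elos ℓ z.2 z.2 ≤ elos ℓ (κ z.1) z.2 := hL.1 _ hκp _ hyI
      have habs : |z.2 - z.1| ≤ 1 := by
        rw [abs_le]; constructor <;> linarith [hp.1, hp.2, hyI.1, hyI.2]
      have h2 : elos ℓ z.1 z.2 - elos ℓ z.1 z.1 ≤ 1 := by
        have hs := hL.2 z.1 hp
        have hd : elos ℓ z.1 z.2 - elos ℓ z.1 z.1 = (z.2 - z.1) * (ℓ z.1 1 - ℓ z.1 0) := by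
          simp only [elos]; ring
        rw [hd]
        calc (z.2 - z.1) * (ℓ z.1 1 - ℓ z.1 0) ≤ |(z.2 - z.1) * (ℓ z.1 1 - ℓ z.1 0)| := le_abs_self _
          _ = |z.2 - z.1| * |ℓ z.1 1 - ℓ z.1 0| := abs_mul _ _
          _ ≤ 1 := mul_le_one₀ habs (abs_nonneg _) hs
      have h3 : elos ℓ z.1 z.1 - elos ℓ z.2 z.2 ≤ 1 := by
        have h3a : elos ℓ z.1 z.1 ≤ elos ℓ z.2 z.1 := hL.1 z.2 hyI z.1 hp
        have hs := hL.2 z.2 hyI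
        have hd : elos ℓ z.2 z.1 - elos ℓ z.2 z.2 = (z.1 - z.2) * (ℓ z.2 1 - ℓ z.2 0) := by
          simp only [elos]; ring
        have habs' : |z.1 - z.2| ≤ 1 := by rw [abs_sub_comm]; exact habs
        have : (z.1 - z.2) * (ℓ z.2 1 - ℓ z.2 0) ≤ 1 := by
          calc (z.1 - z.2) * (ℓ z.2 1 - ℓ z.2 0) ≤ |(z.1 - z.2) * (ℓ z.2 1 - ℓ z.2 0)| := le_abs_self _
            _ = |z.1 - z.2| * |ℓ z.2 1 - ℓ z.2 0| := abs_mul _ _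
            _ ≤ 1 := mul_le_one₀ habs' (abs_nonneg _) hs
        linarith
      linarith
    calc ∫ z, (ℓ z.1 z.2 - ℓ (κ z.1) z.2) ∂J ≤ ∫ _, (2:ℝ) ∂J :=
          integral_mono_ae hint (integrable_const 2) hb
      _ = 2 := by simp
  · rw [integral_undef hint]; norm_num

lemma zero_mem (hK : ValidClass K) :
    (0:ℝ) ∈ { x | ∃ ℓ κ, Lstar ℓ ∧ κ ∈ K ∧
      x = ∫ z, (ℓ z.1 z.2 - ℓ (κ z.1) z.2) ∂J } := by
  refine ⟨fun _ _ => 0, fun p => p, ⟨?_, ?_⟩, hK.2.1, by simp⟩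
  · intro p _ q _; simp [elos]
  · intro p _; simp

lemma le_CDL (hJ : IsPredDist J) (hK : ValidClass K) {ℓ : ℝ → ℝ → ℝ} {κ : ℝ → ℝ}
    (hL : Lstar ℓ) (hκ : κ ∈ K) :
    ∫ z, (ℓ z.1 z.2 - ℓ (κ z.1) z.2) ∂J ≤ CDL K J :=
  le_csSup ⟨2, two_ub hJ hK⟩ ⟨ℓ, κ, hL, hκ, rfl⟩

lemma CDL_nonneg (hJ : IsPredDist J) (hK : ValidClass K) : 0 ≤ CDL K J :=
  le_csSup ⟨2, two_ub hJ hK⟩ (zero_mem hK)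

lemma CDL_le_two (hJ : IsPredDist J) (hK : ValidClass K) : CDL K J ≤ 2 :=
  csSup_le ⟨0, zero_mem hK⟩ (two_ub hJ hK)


lemma shift_mem (hK : ValidClass K) (t : ℝ) :
    (fun p : ℝ => proj01 (proj01 (p + 0) + t)) ∈ K :=
  hK.2.2 0 t _ hK.2.1

lemma claimA (hJ : IsPredDist J) (hK : ValidClass K) {u v : ℝ} (huv : u < v) (hv : v ≤ 1) :
    2 * ∫ z : ℝ × ℝ, (Ioc u v).indicator (fun _ => (1:ℝ)) z.1 * (z.2 - v) ∂J ≤ CDL K J := by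
  haveI := hJ.1
  rcases eq_or_lt_of_le hv with rfl | hv1
  · -- v = 1 : integrand is a.e. nonpositive
    have h0 : ∫ z : ℝ × ℝ, (Ioc u 1).indicator (fun _ => (1:ℝ)) z.1 * (z.2 - 1) ∂J ≤ 0 := by
      refine integral_nonpos_of_ae ?_
      filter_upwards [ae_mem hJ] with z hz
      have h1 := ind_nonneg (B := Ioc u 1) z.1
      have h2 : z.2 - 1 ≤ 0 := by linarith [hz.2.2]
      exact mul_nonpos_iff.mpr (Or.inl ⟨h1, h2⟩)
    linarith [CDL_nonneg hJ hK]
  · set t := v - u with ht_def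
    have ht : 0 < t := by simp [ht_def]; linarith
    have hκ := shift_mem hK t
    have hL := lstar_vloss v (Or.inr rfl : (-1:ℝ) = 1 ∨ (-1:ℝ) = -1)
    have hle := le_CDL hJ hK hL hκ
    have hcong : ∫ z : ℝ × ℝ, (vloss v (-1) z.1 z.2
          - vloss v (-1) ((fun p : ℝ => proj01 (proj01 (p + 0) + t)) z.1) z.2) ∂J
        = ∫ z : ℝ × ℝ, 2 * ((Ioc u v).indicator (fun _ => (1:ℝ)) z.1 * (z.2 - v)) ∂J := by
      refine integral_congr_ae ?_
      filter_upwards [ae_mem hJ] with z hz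
      obtain ⟨hp, _⟩ := hz
      set p := z.1
      have hκp : proj01 (proj01 (p + 0) + t) = min 1 (p + t) := by
        rw [add_zero, proj01_of_mem hp]
        unfold proj01
        rw [max_eq_right (le_min (by norm_num) (by linarith [hp.1]))]
      rw [hκp]
      simp only [vloss]
      have hsgn : signS (-1) (min 1 (p + t) - v) - signS (-1) (p - v)
          = 2 * (Ioc u v).indicator (fun _ => (1:ℝ)) p := by
        by_cases h1 : v < p
        · rw [Set.indicator_of_notMem (by simp [mem_Ioc]; intro _; linarith)]
          rw [signS_pos _ (by linarith : (0:ℝ) < p - v)]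
          rw [signS_pos _ (by
            have : v < min 1 (p + t) := lt_min hv1 (by linarith)
            linarith : (0:ℝ) < min 1 (p + t) - v)]
          ring
        · push_neg at h1
          rw [signS_nonpos_neg1 (by linarith : p - v ≤ 0)]
          by_cases h2 : u < p
          · rw [Set.indicator_of_mem (by exact ⟨h2, h1⟩)]
            rw [signS_pos _ (by
              have : v < min 1 (p + t) := lt_min hv1 (by simp [ht_def]; linarith)
              linarith : (0:ℝ) < min 1 (p + t) - v)]
            norm_num
          · push_neg at h2
            rw [Set.indicator_of_notMem (by simp [mem_Ioc]; intro h; linarith)]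
            rw [signS_nonpos_neg1 (by
              have hmin : min 1 (p + t) ≤ p + t := min_le_right _ _
              simp only [ht_def] at hmin ⊢
              linarith : min 1 (p + t) - v ≤ 0)]
            norm_num
      calc -signS (-1) (p - v) * (z.2 - v) - -signS (-1) (min 1 (p + t) - v) * (z.2 - v)
          = (signS (-1) (min 1 (p + t) - v) - signS (-1) (p - v)) * (z.2 - v) := by ring
        _ = 2 * ((Ioc u v).indicator (fun _ => (1:ℝ)) p * (z.2 - v)) := by rw [hsgn]; ring
    rw [hcong, integral_const_mul] at hle
    exact hle

lemma claimB (hJ : IsPredDist J) (hK : ValidClass K) {u v : ℝ} (huv : u < v) (hu : 0 ≤ u) :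
    -(CDL K J) ≤ 2 * ∫ z : ℝ × ℝ, (Ioc u v).indicator (fun _ => (1:ℝ)) z.1 * (z.2 - u) ∂J := by
  haveI := hJ.1
  set t := v - u with ht_def
  have ht : 0 < t := by simp [ht_def]; linarith
  have hκ := shift_mem hK (-t)
  have hL := lstar_vloss u (Or.inr rfl : (-1:ℝ) = 1 ∨ (-1:ℝ) = -1)
  have hle := le_CDL hJ hK hL hκ
  have hcong : ∫ z : ℝ × ℝ, (vloss u (-1) z.1 z.2
        - vloss u (-1) ((fun p : ℝ => proj01 (proj01 (p + 0) + -t)) z.1) z.2) ∂J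
      = ∫ z : ℝ × ℝ, (-2) * ((Ioc u v).indicator (fun _ => (1:ℝ)) z.1 * (z.2 - u)) ∂J := by
    refine integral_congr_ae ?_
    filter_upwards [ae_mem hJ] with z hz
    obtain ⟨hp, _⟩ := hz
    set p := z.1
    have hκp : proj01 (proj01 (p + 0) + -t) = max 0 (p - t) := by
      rw [add_zero, proj01_of_mem hp]
      unfold proj01
      rw [min_eq_right (by linarith [hp.2] : p + -t ≤ 1)]
      ring_nf
    rw [hκp]
    simp only [vloss]
    have hsgn : signS (-1) (max 0 (p - t) - u) - signS (-1) (p - u)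
        = -2 * (Ioc u v).indicator (fun _ => (1:ℝ)) p := by
      by_cases h1 : u < p
      · rw [signS_pos _ (by linarith : (0:ℝ) < p - u)]
        by_cases h2 : p ≤ v
        · rw [Set.indicator_of_mem (by exact ⟨h1, h2⟩)]
          rw [signS_nonpos_neg1 (by
            have : max 0 (p - t) ≤ u := max_le hu (by simp [ht_def]; linarith)
            linarith : max 0 (p - t) - u ≤ 0)]
          norm_num
        · push_neg at h2
          rw [Set.indicator_of_notMem (by simp [mem_Ioc]; intro _; linarith)]
          rw [signS_pos _ (by
            have : u < p - t := by simp [ht_def]; linarith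
            have : u < max 0 (p - t) := lt_of_lt_of_le this (le_max_right _ _)
            linarith : (0:ℝ) < max 0 (p - t) - u)]
          norm_num
      · push_neg at h1
        rw [Set.indicator_of_notMem (by simp [mem_Ioc]; intro h; linarith)]
        rw [signS_nonpos_neg1 (by linarith : p - u ≤ 0)]
        rw [signS_nonpos_neg1 (by
          have : max 0 (p - t) ≤ u := max_le hu (by linarith)
          linarith : max 0 (p - t) - u ≤ 0)]
        norm_num
    calc -signS (-1) (p - u) * (z.2 - u) - -signS (-1) (max 0 (p - t) - u) * (z.2 - u)
        = (signS (-1) (max 0 (p - t) - u) - signS (-1) (p - u)) * (z.2 - u) := by ring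
      _ = (-2) * ((Ioc u v).indicator (fun _ => (1:ℝ)) p * (z.2 - u)) := by rw [hsgn]; ring
  rw [hcong, integral_const_mul] at hle
  linarith

lemma claimB' (hJ : IsPredDist J) (hK : ValidClass K) {u v : ℝ} (huv : u < v) (hu : 0 ≤ u) :
    -(CDL K J) ≤ 2 * ∫ z : ℝ × ℝ, (Ico u v).indicator (fun _ => (1:ℝ)) z.1 * (z.2 - u) ∂J := by
  haveI := hJ.1
  rcases eq_or_lt_of_le hu with rfl | hu0
  · -- u = 0 : integrand is a.e. nonnegative
    have h0 : 0 ≤ ∫ z : ℝ × ℝ, (Ico 0 v).indicator (fun _ => (1:ℝ)) z.1 * (z.2 - 0) ∂J := by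
      refine integral_nonneg_of_ae ?_
      filter_upwards [ae_mem hJ] with z hz
      have h1 := ind_nonneg (B := Ico 0 v) z.1
      have h2 : 0 ≤ z.2 - 0 := by linarith [hz.2.1]
      exact mul_nonneg h1 h2
    linarith [CDL_nonneg hJ hK]
  · set t := v - u with ht_def
    have ht : 0 < t := by simp [ht_def]; linarith
    have hκ := shift_mem hK (-t)
    have hL := lstar_vloss u (Or.inl rfl : (1:ℝ) = 1 ∨ (1:ℝ) = -1)
    have hle := le_CDL hJ hK hL hκ
    have hcong : ∫ z : ℝ × ℝ, (vloss u 1 z.1 z.2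
          - vloss u 1 ((fun p : ℝ => proj01 (proj01 (p + 0) + -t)) z.1) z.2) ∂J
        = ∫ z : ℝ × ℝ, (-2) * ((Ico u v).indicator (fun _ => (1:ℝ)) z.1 * (z.2 - u)) ∂J := by
      refine integral_congr_ae ?_
      filter_upwards [ae_mem hJ] with z hz
      obtain ⟨hp, _⟩ := hz
      set p := z.1
      have hκp : proj01 (proj01 (p + 0) + -t) = max 0 (p - t) := by
        rw [add_zero, proj01_of_mem hp]
        unfold proj01
        rw [min_eq_right (by linarith [hp.2] : p + -t ≤ 1)]
        ring_nf
      rw [hκp]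
      simp only [vloss]
      have hsgn : signS 1 (max 0 (p - t) - u) - signS 1 (p - u)
          = -2 * (Ico u v).indicator (fun _ => (1:ℝ)) p := by
        by_cases h1 : u ≤ p
        · rw [signS_nonneg_pos1 (by linarith : (0:ℝ) ≤ p - u)]
          by_cases h2 : p < v
          · rw [Set.indicator_of_mem (by exact ⟨h1, h2⟩)]
            rw [signS_neg _ (by
              have : max 0 (p - t) < u := max_lt hu0 (by simp [ht_def]; linarith)
              linarith : max 0 (p - t) - u < 0)]
            norm_num
          · push_neg at h2
            rw [Set.indicator_of_notMem (by simp [mem_Ico]; intro _; linarith)]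
            rw [signS_nonneg_pos1 (by
              have : u ≤ p - t := by simp [ht_def]; linarith
              have : u ≤ max 0 (p - t) := le_trans this (le_max_right _ _)
              linarith : (0:ℝ) ≤ max 0 (p - t) - u)]
            norm_num
        · push_neg at h1
          rw [Set.indicator_of_notMem (by simp [mem_Ico]; intro h; linarith)]
          rw [signS_neg _ (by linarith : p - u < 0)]
          rw [signS_neg _ (by
            have : max 0 (p - t) < u := max_lt hu0 (by linarith)
            linarith : max 0 (p - t) - u < 0)]
          norm_num
      calc -signS 1 (p - u) * (z.2 - u) - -signS 1 (max 0 (p - t) - u) * (z.2 - u)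
          = (signS 1 (max 0 (p - t) - u) - signS 1 (p - u)) * (z.2 - u) := by ring
        _ = (-2) * ((Ico u v).indicator (fun _ => (1:ℝ)) p * (z.2 - u)) := by rw [hsgn]; ring
    rw [hcong, integral_const_mul] at hle
    linarith


lemma tile_bound (hJ : IsPredDist J) (hK : ValidClass K) {u v : ℝ}
    (hu : 0 ≤ u) (huv : u < v) (hv : v ≤ 1) :
    |∫ z : ℝ × ℝ, (Ioc u v).indicator (fun _ => (1:ℝ)) z.1 * (z.2 - z.1) ∂J|
      ≤ CDL K J / 2 + (v - u) * ∫ z : ℝ × ℝ, (Ioc u v).indicator (fun _ => (1:ℝ)) z.1 ∂J := by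
  haveI := hJ.1
  have hB : MeasurableSet (Ioc u v) := measurableSet_Ioc
  have huI : u ∈ Icc (0:ℝ) 1 := ⟨hu, by linarith⟩
  have hvI : v ∈ Icc (0:ℝ) 1 := ⟨by linarith, hv⟩
  have hIc : Integrable (fun z : ℝ × ℝ => (Ioc u v).indicator (fun _ => (1:ℝ)) z.1) J :=
    integrable_ind hJ hB
  have hμ0 : 0 ≤ ∫ z : ℝ × ℝ, (Ioc u v).indicator (fun _ => (1:ℝ)) z.1 ∂J :=
    integral_nonneg fun z => ind_nonneg _
  set μB := ∫ z : ℝ × ℝ, (Ioc u v).indicator (fun _ => (1:ℝ)) z.1 ∂J with hμB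
  -- upper bound
  have hsplit_up : (fun z : ℝ × ℝ => (Ioc u v).indicator (fun _ => (1:ℝ)) z.1 * (z.2 - z.1))
      = fun z : ℝ × ℝ => (Ioc u v).indicator (fun _ => (1:ℝ)) z.1 * (z.2 - v)
          + (Ioc u v).indicator (fun _ => (1:ℝ)) z.1 * (v - z.1) := by
    funext z; ring
  have hint1 := integrable_ind_sub_const hJ hB hvI
  have hint2 := integrable_ind_const_sub hJ hB hvI
  have hup : ∫ z : ℝ × ℝ, (Ioc u v).indicator (fun _ => (1:ℝ)) z.1 * (z.2 - z.1) ∂J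
      ≤ CDL K J / 2 + (v - u) * μB := by
    rw [hsplit_up, integral_add hint1 hint2]
    have h1 : ∫ z : ℝ × ℝ, (Ioc u v).indicator (fun _ => (1:ℝ)) z.1 * (z.2 - v) ∂J
        ≤ CDL K J / 2 := by linarith [claimA hJ hK huv hv]
    have h2 : ∫ z : ℝ × ℝ, (Ioc u v).indicator (fun _ => (1:ℝ)) z.1 * (v - z.1) ∂J
        ≤ (v - u) * μB := by
      rw [hμB, ← integral_const_mul]
      refine integral_mono_ae hint2 (hIc.const_mul _) ?_
      filter_upwards with z
      by_cases h : z.1 ∈ Ioc u v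
      · rw [Set.indicator_of_mem h]
        obtain ⟨h1', h2'⟩ := h
        nlinarith
      · rw [Set.indicator_of_notMem h]; norm_num
    linarith
  -- lower bound
  have hsplit_lo : (fun z : ℝ × ℝ => (Ioc u v).indicator (fun _ => (1:ℝ)) z.1 * (z.2 - z.1))
      = fun z : ℝ × ℝ => (Ioc u v).indicator (fun _ => (1:ℝ)) z.1 * (z.2 - u)
          + (Ioc u v).indicator (fun _ => (1:ℝ)) z.1 * (u - z.1) := by
    funext z; ring
  have hint3 := integrable_ind_sub_const hJ hB huI
  have hint4 := integrable_ind_const_sub hJ hB huI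
  have hlo : -(CDL K J / 2 + (v - u) * μB)
      ≤ ∫ z : ℝ × ℝ, (Ioc u v).indicator (fun _ => (1:ℝ)) z.1 * (z.2 - z.1) ∂J := by
    rw [hsplit_lo, integral_add hint3 hint4]
    have h1 : -(CDL K J / 2) ≤ ∫ z : ℝ × ℝ, (Ioc u v).indicator (fun _ => (1:ℝ)) z.1 * (z.2 - u) ∂J := by
      linarith [claimB hJ hK huv hu]
    have h2 : -((v - u) * μB) ≤ ∫ z : ℝ × ℝ, (Ioc u v).indicator (fun _ => (1:ℝ)) z.1 * (u - z.1) ∂J := by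
      have hle2 : ∫ z : ℝ × ℝ, (-(v - u)) * (Ioc u v).indicator (fun _ => (1:ℝ)) z.1 ∂J
          ≤ ∫ z : ℝ × ℝ, (Ioc u v).indicator (fun _ => (1:ℝ)) z.1 * (u - z.1) ∂J := by
        refine integral_mono_ae (hIc.const_mul _) hint4 ?_
        filter_upwards with z
        by_cases h : z.1 ∈ Ioc u v
        · rw [Set.indicator_of_mem h]
          obtain ⟨h1', h2'⟩ := h
          nlinarith
        · rw [Set.indicator_of_notMem h]; norm_num
      rw [integral_const_mul] at hle2
      rw [hμB]
      linarith
    linarith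
  rw [abs_le]
  exact ⟨hlo, hup⟩

lemma indsum (f : ℕ → ℝ) (hf : ∀ i, f i ≤ f (i + 1)) (N : ℕ) (x : ℝ) :
    (Ioc (f 0) (f N)).indicator (fun _ => (1:ℝ)) x
      = ∑ i ∈ Finset.range N, (Ioc (f i) (f (i + 1))).indicator (fun _ => (1:ℝ)) x := by
  induction N with
  | zero => simp
  | succ N ih =>
    have hmono : Monotone f := monotone_nat_of_le_succ hf
    rw [Finset.sum_range_succ, ← ih]
    have hdisj : Disjoint (Ioc (f 0) (f N)) (Ioc (f N) (f (N + 1))) :=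
      Set.Ioc_disjoint_Ioc_of_le le_rfl
    have hun : Ioc (f 0) (f N) ∪ Ioc (f N) (f (N + 1)) = Ioc (f 0) (f (N + 1)) :=
      Set.Ioc_union_Ioc_eq_Ioc (hmono (Nat.zero_le N)) (hf N)
    rw [← hun, Set.indicator_union_of_disjoint hdisj]

lemma sum_bound_N (hJ : IsPredDist J) (hK : ValidClass K) {a b : ℝ}
    (ha : 0 ≤ a) (hab : a < b) (hb : b ≤ 1) (N : ℕ) (hN : 1 ≤ N) :
    |∫ z : ℝ × ℝ, (Ioc a b).indicator (fun _ => (1:ℝ)) z.1 * (z.2 - z.1) ∂J|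
      ≤ N * (CDL K J / 2) + 1 / N := by
  haveI := hJ.1
  have hNR : (0:ℝ) < N := by exact_mod_cast hN
  set t := (b - a) / N with ht_def
  have ht : 0 < t := by simp only [ht_def]; exact div_pos (by linarith) hNR
  set f : ℕ → ℝ := fun i => a + i * t with hf_def
  have hfmono : ∀ i, f i ≤ f (i + 1) := by
    intro i; simp only [hf_def]; push_cast; nlinarith
  have hf0 : f 0 = a := by simp [hf_def]
  have hfN : f N = b := by
    simp only [hf_def, ht_def]; field_simp; ring
  have hfi_lt : ∀ i, f i < f (i + 1) := by
    intro i; simp only [hf_def]; push_cast; nlinarith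
  have hfi_nonneg : ∀ i, 0 ≤ f i := by
    intro i; simp only [hf_def]
    have hi : (0:ℝ) ≤ (i:ℝ) := Nat.cast_nonneg i
    nlinarith
  have hfi_le : ∀ i : ℕ, i ≤ N → f i ≤ 1 := by
    intro i hi
    have : f i ≤ f N := (monotone_nat_of_le_succ hfmono) hi
    rw [hfN] at this; linarith
  have hsplit : ∀ z : ℝ × ℝ, (Ioc a b).indicator (fun _ => (1:ℝ)) z.1 * (z.2 - z.1)
      = ∑ i ∈ Finset.range N, (Ioc (f i) (f (i + 1))).indicator (fun _ => (1:ℝ)) z.1 * (z.2 - z.1) := by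
    intro z
    rw [← Finset.sum_mul, ← indsum f hfmono N z.1, hf0, hfN]
  have hIeq : ∫ z : ℝ × ℝ, (Ioc a b).indicator (fun _ => (1:ℝ)) z.1 * (z.2 - z.1) ∂J
      = ∑ i ∈ Finset.range N, ∫ z : ℝ × ℝ, (Ioc (f i) (f (i + 1))).indicator (fun _ => (1:ℝ)) z.1 * (z.2 - z.1) ∂J := by
    rw [show (fun z : ℝ × ℝ => (Ioc a b).indicator (fun _ => (1:ℝ)) z.1 * (z.2 - z.1))
        = fun z : ℝ × ℝ => ∑ i ∈ Finset.range N, (Ioc (f i) (f (i + 1))).indicator (fun _ => (1:ℝ)) z.1 * (z.2 - z.1) from funext hsplit]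
    exact integral_finset_sum _ fun i _ => integrable_ind_sub hJ measurableSet_Ioc
  have htile : ∀ i ∈ Finset.range N,
      |∫ z : ℝ × ℝ, (Ioc (f i) (f (i + 1))).indicator (fun _ => (1:ℝ)) z.1 * (z.2 - z.1) ∂J|
        ≤ CDL K J / 2 + t * ∫ z : ℝ × ℝ, (Ioc (f i) (f (i + 1))).indicator (fun _ => (1:ℝ)) z.1 ∂J := by
    intro i hi
    rw [Finset.mem_range] at hi
    have := tile_bound hJ hK (hfi_nonneg i) (hfi_lt i) (hfi_le (i + 1) hi)
    have he : f (i + 1) - f i = t := by simp only [hf_def]; push_cast; ring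
    rw [he] at this
    exact this
  have hμsum : ∑ i ∈ Finset.range N, ∫ z : ℝ × ℝ, (Ioc (f i) (f (i + 1))).indicator (fun _ => (1:ℝ)) z.1 ∂J ≤ 1 := by
    have h1 : ∑ i ∈ Finset.range N, ∫ z : ℝ × ℝ, (Ioc (f i) (f (i + 1))).indicator (fun _ => (1:ℝ)) z.1 ∂J
        = ∫ z : ℝ × ℝ, (Ioc a b).indicator (fun _ => (1:ℝ)) z.1 ∂J := by
      rw [← integral_finset_sum _ fun i _ => integrable_ind hJ measurableSet_Ioc]
      refine integral_congr_ae (Filter.Eventually.of_forall fun z => ?_)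
      show (∑ i ∈ Finset.range N, (Ioc (f i) (f (i + 1))).indicator (fun _ => (1:ℝ)) z.1)
        = (Ioc a b).indicator (fun _ => (1:ℝ)) z.1
      rw [← indsum f hfmono N z.1, hf0, hfN]
    rw [h1]
    calc ∫ z : ℝ × ℝ, (Ioc a b).indicator (fun _ => (1:ℝ)) z.1 ∂J
        ≤ ∫ _ : ℝ × ℝ, (1:ℝ) ∂J := by
          refine integral_mono_ae (integrable_ind hJ measurableSet_Ioc) (integrable_const 1) ?_
          filter_upwards with z
          have := abs_ind_le (B := Ioc a b) z.1
          linarith [abs_le.mp this]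
      _ = 1 := by simp
  have hμi_nonneg : ∀ i ∈ Finset.range N,
      0 ≤ ∫ z : ℝ × ℝ, (Ioc (f i) (f (i + 1))).indicator (fun _ => (1:ℝ)) z.1 ∂J :=
    fun i _ => integral_nonneg fun z => ind_nonneg _
  calc |∫ z : ℝ × ℝ, (Ioc a b).indicator (fun _ => (1:ℝ)) z.1 * (z.2 - z.1) ∂J|
      = |∑ i ∈ Finset.range N, ∫ z : ℝ × ℝ, (Ioc (f i) (f (i + 1))).indicator (fun _ => (1:ℝ)) z.1 * (z.2 - z.1) ∂J| := by rw [hIeq]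
    _ ≤ ∑ i ∈ Finset.range N, |∫ z : ℝ × ℝ, (Ioc (f i) (f (i + 1))).indicator (fun _ => (1:ℝ)) z.1 * (z.2 - z.1) ∂J| :=
        Finset.abs_sum_le_sum_abs _ _
    _ ≤ ∑ i ∈ Finset.range N, (CDL K J / 2 + t * ∫ z : ℝ × ℝ, (Ioc (f i) (f (i + 1))).indicator (fun _ => (1:ℝ)) z.1 ∂J) :=
        Finset.sum_le_sum htile
    _ = N * (CDL K J / 2) + t * ∑ i ∈ Finset.range N, ∫ z : ℝ × ℝ, (Ioc (f i) (f (i + 1))).indicator (fun _ => (1:ℝ)) z.1 ∂J := by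
        rw [Finset.sum_add_distrib, Finset.sum_const, Finset.card_range, ← Finset.mul_sum]
        push_cast; ring
    _ ≤ N * (CDL K J / 2) + 1 / N := by
        have hs0 : 0 ≤ ∑ i ∈ Finset.range N, ∫ z : ℝ × ℝ, (Ioc (f i) (f (i + 1))).indicator (fun _ => (1:ℝ)) z.1 ∂J :=
          Finset.sum_nonneg hμi_nonneg
        have h2 : t * ∑ i ∈ Finset.range N, ∫ z : ℝ × ℝ, (Ioc (f i) (f (i + 1))).indicator (fun _ => (1:ℝ)) z.1 ∂J ≤ t * 1 :=
          mul_le_mul_of_nonneg_left hμsum ht.le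
        have h3 : t ≤ 1 / N := by
          rw [ht_def, div_le_div_iff₀ hNR hNR]
          nlinarith
        linarith


lemma chooseN {D X : ℝ} (hD0 : 0 ≤ D) (hD2 : D ≤ 2)
    (h : ∀ N : ℕ, 1 ≤ N → |X| ≤ N * (D / 2) + 1 / N) : |X| ≤ 3 * Real.sqrt D := by
  rcases eq_or_lt_of_le hD0 with rfl | hD
  · -- D = 0
    simp only [Real.sqrt_zero, mul_zero]
    by_contra hc
    push_neg at hc
    obtain ⟨N, hN⟩ := exists_nat_gt (1 / |X|)
    have hN1 : 1 ≤ N := by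
      by_contra hn
      push_neg at hn
      interval_cases N
      simp at hN
      have := abs_nonneg X
      nlinarith
    have hb := h N hN1
    have hX0 : 0 < |X| := hc
    have hNpos : (0:ℝ) < N := by positivity
    rw [div_lt_iff₀ hX0] at hN
    have : 1 / (N:ℝ) < |X| := by
      rw [div_lt_iff₀ hNpos]
      linarith [mul_comm (N:ℝ) |X|]
    simp only [zero_div, mul_zero, zero_add] at hb
    linarith
  · set r := Real.sqrt D with hr_def
    have hr0 : 0 < r := Real.sqrt_pos.mpr hD
    have hrr : r * r = D := Real.mul_self_sqrt hD0
    have hr2 : r ≤ 3 / 2 := by nlinarith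
    set N := ⌈1 / r⌉₊ with hN_def
    have h1r : 0 < 1 / r := by positivity
    have hN1 : 1 ≤ N := Nat.one_le_iff_ne_zero.mpr (by
      simp only [hN_def]
      exact Nat.ceil_pos.mpr h1r |>.ne')
    have hNge : 1 / r ≤ (N:ℝ) := Nat.le_ceil _
    have hNle : (N:ℝ) ≤ 1 / r + 1 := (Nat.ceil_lt_add_one h1r.le).le
    have hNpos : (0:ℝ) < N := lt_of_lt_of_le h1r hNge
    have hb := h N hN1
    have h2 : 1 / (N:ℝ) ≤ r := by
      rw [div_le_iff₀ hNpos]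
      calc (1:ℝ) = r * (1 / r) := by field_simp
        _ ≤ r * N := mul_le_mul_of_nonneg_left hNge hr0.le
    have h3 : (N:ℝ) * (D / 2) ≤ (1 / r + 1) * (D / 2) :=
      mul_le_mul_of_nonneg_right hNle (by linarith)
    have h4 : (1 / r + 1) * (D / 2) = r / 2 + r * r / 2 := by
      field_simp
      nlinarith [hrr]
    nlinarith

lemma sum_bound (hJ : IsPredDist J) (hK : ValidClass K) {a b : ℝ}
    (ha : 0 ≤ a) (hab : a ≤ b) (hb : b ≤ 1) :
    |∫ z : ℝ × ℝ, (Ioc a b).indicator (fun _ => (1:ℝ)) z.1 * (z.2 - z.1) ∂J|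
      ≤ 3 * Real.sqrt (CDL K J) := by
  rcases eq_or_lt_of_le hab with rfl | hlt
  · simp [Set.indicator_empty]
  · exact chooseN (CDL_nonneg hJ hK) (CDL_le_two hJ hK) (sum_bound_N hJ hK ha hlt hb)

lemma singleton_bound (hJ : IsPredDist J) (hK : ValidClass K) {v : ℝ}
    (hv : v ∈ Icc (0:ℝ) 1) :
    |∫ z : ℝ × ℝ, ({v} : Set ℝ).indicator (fun _ => (1:ℝ)) z.1 * (z.2 - z.1) ∂J|
      ≤ CDL K J / 2 := by
  haveI := hJ.1
  have hrw : (fun z : ℝ × ℝ => ({v} : Set ℝ).indicator (fun _ => (1:ℝ)) z.1 * (z.2 - z.1))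
      = fun z : ℝ × ℝ => ({v} : Set ℝ).indicator (fun _ => (1:ℝ)) z.1 * (z.2 - v) := by
    funext z
    by_cases h : z.1 ∈ ({v} : Set ℝ)
    · have : z.1 = v := h
      rw [this]
    · rw [Set.indicator_of_notMem h]
      ring
  rw [hrw]
  -- dominated convergence set-up
  have hbd : ∀ (B : Set ℝ), ∀ᵐ z ∂J, ‖B.indicator (fun _ => (1:ℝ)) z.1 * (z.2 - v)‖ ≤ 1 := by
    intro B
    filter_upwards [ae_mem hJ] with z hz
    rw [Real.norm_eq_abs, abs_mul]
    refine mul_le_one₀ (abs_ind_le _) (abs_nonneg _) ?_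
    rw [abs_le]
    constructor <;> linarith [hz.2.1, hz.2.2, hv.1, hv.2]
  rw [abs_le]
  constructor
  · -- lower bound via Ico tiles
    have hconv : Tendsto (fun n : ℕ => ∫ z : ℝ × ℝ,
        (Ico v (v + 1 / (n + 1))).indicator (fun _ => (1:ℝ)) z.1 * (z.2 - v) ∂J) atTop
        (𝓝 (∫ z : ℝ × ℝ, ({v} : Set ℝ).indicator (fun _ => (1:ℝ)) z.1 * (z.2 - v) ∂J)) := by
      refine tendsto_integral_of_dominated_convergence (fun _ => (1:ℝ))
        (fun n => ((meas_ind measurableSet_Ico).mul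
          (measurable_snd.sub measurable_const)).aestronglyMeasurable)
        (integrable_const 1) (fun n => hbd _) ?_
      refine Filter.Eventually.of_forall fun z => ?_
      by_cases hz : z.1 = v
      · have hmem : ∀ n : ℕ, z.1 ∈ Ico v (v + 1 / (n + 1)) := by
          intro n
          constructor
          · rw [hz]
          · rw [hz]; have : (0:ℝ) < 1 / (n + 1) := by positivity
            linarith
        have hmem' : z.1 ∈ ({v} : Set ℝ) := hz
        simp only [fun n => Set.indicator_of_mem (hmem n) (fun _ => (1:ℝ)),
          Set.indicator_of_mem hmem' (fun _ => (1:ℝ))]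
        exact tendsto_const_nhds
      · have hnm' : z.1 ∉ ({v} : Set ℝ) := hz
        rw [Set.indicator_of_notMem hnm']
        rcases lt_or_gt_of_ne hz with hlt | hgt
        · have : ∀ n : ℕ, z.1 ∉ Ico v (v + 1 / (n + 1)) := by
            intro n hmem; exact absurd hmem.1 (not_le.mpr hlt)
          simp only [fun n => Set.indicator_of_notMem (this n) (fun _ => (1:ℝ))]
          simp only [zero_mul]
          exact tendsto_const_nhds
        · -- z.1 > v : eventually out
          refine Tendsto.congr' ?_ tendsto_const_nhds
          obtain ⟨M, hM⟩ := exists_nat_gt (1 / (z.1 - v))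
          filter_upwards [eventually_ge_atTop M] with n hn
          have hnm : z.1 ∉ Ico v (v + 1 / (n + 1)) := by
            intro hmem
            have h1 : 1 / (z.1 - v) < (n:ℝ) + 1 := by
              have : (M:ℝ) ≤ n := by exact_mod_cast hn
              linarith
            have hzv : 0 < z.1 - v := by linarith
            rw [div_lt_iff₀ hzv] at h1
            have h2 : 1 / ((n:ℝ) + 1) < z.1 - v := by
              rw [div_lt_iff₀ (by positivity : (0:ℝ) < (n:ℝ) + 1)]
              linarith [mul_comm ((n:ℝ) + 1) (z.1 - v)]
            linarith [hmem.2]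
          rw [Set.indicator_of_notMem hnm]
    refine ge_of_tendsto hconv ?_
    refine Filter.Eventually.of_forall fun n => ?_
    have h1n : (0:ℝ) < 1 / (n + 1) := by positivity
    have := claimB' hJ hK (by linarith : v < v + 1 / (n + 1 : ℝ)) hv.1
    linarith
  · -- upper bound via Ioc tiles
    have hconv : Tendsto (fun n : ℕ => ∫ z : ℝ × ℝ,
        (Ioc (v - 1 / (n + 1)) v).indicator (fun _ => (1:ℝ)) z.1 * (z.2 - v) ∂J) atTop
        (𝓝 (∫ z : ℝ × ℝ, ({v} : Set ℝ).indicator (fun _ => (1:ℝ)) z.1 * (z.2 - v) ∂J)) := by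
      refine tendsto_integral_of_dominated_convergence (fun _ => (1:ℝ))
        (fun n => ((meas_ind measurableSet_Ioc).mul
          (measurable_snd.sub measurable_const)).aestronglyMeasurable)
        (integrable_const 1) (fun n => hbd _) ?_
      refine Filter.Eventually.of_forall fun z => ?_
      by_cases hz : z.1 = v
      · have hmem : ∀ n : ℕ, z.1 ∈ Ioc (v - 1 / (n + 1)) v := by
          intro n
          constructor
          · rw [hz]; have : (0:ℝ) < 1 / (n + 1) := by positivity
            linarith
          · rw [hz]
        have hmem' : z.1 ∈ ({v} : Set ℝ) := hz
        simp only [fun n => Set.indicator_of_mem (hmem n) (fun _ => (1:ℝ)),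
          Set.indicator_of_mem hmem' (fun _ => (1:ℝ))]
        exact tendsto_const_nhds
      · have hnm' : z.1 ∉ ({v} : Set ℝ) := hz
        rw [Set.indicator_of_notMem hnm']
        rcases lt_or_gt_of_ne hz with hlt | hgt
        · -- z.1 < v : eventually out
          refine Tendsto.congr' ?_ tendsto_const_nhds
          obtain ⟨M, hM⟩ := exists_nat_gt (1 / (v - z.1))
          filter_upwards [eventually_ge_atTop M] with n hn
          have hnm : z.1 ∉ Ioc (v - 1 / (n + 1)) v := by
            intro hmem
            have h1 : 1 / (v - z.1) < (n:ℝ) + 1 := by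
              have : (M:ℝ) ≤ n := by exact_mod_cast hn
              linarith
            have hzv : 0 < v - z.1 := by linarith
            rw [div_lt_iff₀ hzv] at h1
            have h2 : 1 / ((n:ℝ) + 1) < v - z.1 := by
              rw [div_lt_iff₀ (by positivity : (0:ℝ) < (n:ℝ) + 1)]
              linarith [mul_comm ((n:ℝ) + 1) (v - z.1)]
            linarith [hmem.1]
          rw [Set.indicator_of_notMem hnm]
        · have : ∀ n : ℕ, z.1 ∉ Ioc (v - 1 / (n + 1)) v := by
            intro n hmem; exact absurd hmem.2 (not_le.mpr hgt)
          simp only [fun n => Set.indicator_of_notMem (this n) (fun _ => (1:ℝ))]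
          simp only [zero_mul]
          exact tendsto_const_nhds
    refine le_of_tendsto hconv ?_
    refine Filter.Eventually.of_forall fun n => ?_
    have h1n : (0:ℝ) < 1 / (n + 1) := by positivity
    have := claimA hJ hK (by linarith : v - 1 / (n + 1 : ℝ) < v) hv.2
    linarith

open scoped Classical in
lemma interval_dec (I : Set ℝ) (a b ca cb : ℝ) (hlt : a < b)
    (hca : ca = if a ∈ I then (1:ℝ) else 0) (hcb : cb = if b ∈ I then (0:ℝ) else 1)
    (hIcc : I ⊆ Icc a b) (hIoo : Ioo a b ⊆ I) :
    ∀ x : ℝ, I.indicator (fun _ => (1:ℝ)) x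
          = (Ioc a b).indicator (fun _ => (1:ℝ)) x
            + ca * ({a} : Set ℝ).indicator (fun _ => (1:ℝ)) x
            - cb * ({b} : Set ℝ).indicator (fun _ => (1:ℝ)) x := by
  intro x
  have hxIcc : x ∈ I → a ≤ x ∧ x ≤ b := fun h => hIcc h
  have hxIoo : a < x → x < b → x ∈ I := fun h1 h2 => hIoo ⟨h1, h2⟩
  rw [hca, hcb]
  rcases eq_or_ne x a with rfl | hxa
  · have h1 : ¬(x < x ∧ x ≤ b) := by simp
    have h2 : x ≠ b := ne_of_lt hlt
    by_cases haIn : x ∈ I <;>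
      simp [Set.indicator_apply, Set.mem_Ioc, Set.mem_singleton_iff, haIn, h1, h2]
  · rcases eq_or_ne x b with rfl | hxb
    · by_cases hbIn : x ∈ I <;>
        simp [Set.indicator_apply, Set.mem_Ioc, Set.mem_singleton_iff, hbIn, hxa, hlt]
    · by_cases hxI : x ∈ I
      · have h := hxIcc hxI
        have h3 : a < x := lt_of_le_of_ne h.1 (Ne.symm hxa)
        simp [Set.indicator_apply, Set.mem_Ioc, Set.mem_singleton_iff, hxI, hxa, hxb, h3, h.2]
      · have hnm : ¬(a < x ∧ x ≤ b) := by
          rintro ⟨hh1, hh2⟩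
          exact hxI (hxIoo hh1 (lt_of_le_of_ne hh2 hxb))
        simp [Set.indicator_apply, Set.mem_Ioc, Set.mem_singleton_iff, hxI, hxa, hxb, hnm]

end IntervalCEAux

/-- interval-restricted calibration errors are bounded in absolute value
by `C·√(CDL_K(J))`, for every interval `I ⊆ [0,1]`. -/
theorem interval_CE_bound :
    ∃ C : ℝ, 0 < C ∧ ∀ (J : Measure (ℝ × ℝ)) (K : Set (ℝ → ℝ)),
      IsPredDist J → ValidClass K →
      ∀ I : Set ℝ, I.OrdConnected → I ⊆ Icc (0:ℝ) 1 →
        |∫ z, I.indicator (fun _ => (1:ℝ)) z.1 * (z.2 - z.1) ∂J| ≤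
          C * Real.sqrt (CDL K J) := by
  classical
  refine ⟨10, by norm_num, ?_⟩
  intro J K hJ hK I hOrd hsub
  haveI := hJ.1
  have hD0 := IntervalCEAux.CDL_nonneg hJ hK
  have hD2 := IntervalCEAux.CDL_le_two hJ hK
  have hsq0 : 0 ≤ Real.sqrt (CDL K J) := Real.sqrt_nonneg _
  have hDsqrt : CDL K J ≤ 2 * Real.sqrt (CDL K J) := by
    have hrr : Real.sqrt (CDL K J) * Real.sqrt (CDL K J) = CDL K J :=
      Real.mul_self_sqrt hD0
    rcases le_total (Real.sqrt (CDL K J)) 1 with h | h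
    · nlinarith
    · nlinarith
  by_cases hne : I.Nonempty
  swap
  · rw [Set.not_nonempty_iff_eq_empty] at hne
    rw [hne]
    simp only [Set.indicator_empty, Pi.zero_apply, zero_mul, integral_zero, abs_zero]
    positivity
  · have hbddb : BddBelow I := BddBelow.mono hsub bddBelow_Icc
    have hbdda : BddAbove I := BddAbove.mono hsub bddAbove_Icc
    set a := sInf I with ha_def
    set b := sSup I with hb_def
    have ha0 : 0 ≤ a := le_csInf hne fun x hx => (hsub hx).1
    have hb1 : b ≤ 1 := csSup_le hne fun x hx => (hsub hx).2
    have hab : a ≤ b := csInf_le_csSup hne hbddb hbdda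
    have haI : a ∈ Icc (0:ℝ) 1 := ⟨ha0, le_trans hab hb1⟩
    have hbI : b ∈ Icc (0:ℝ) 1 := ⟨le_trans ha0 hab, hb1⟩
    have hIcc : I ⊆ Icc a b := fun x hx => ⟨csInf_le hbddb hx, le_csSup hbdda hx⟩
    have hIoo : Ioo a b ⊆ I := by
      intro x hx
      obtain ⟨y, hyI, hyx⟩ := exists_lt_of_csInf_lt hne hx.1
      obtain ⟨w, hwI, hxw⟩ := exists_lt_of_lt_csSup hne hx.2
      exact hOrd.out hyI hwI ⟨hyx.le, hxw.le⟩
    rcases eq_or_lt_of_le hab with heq | hlt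
    · -- degenerate: I is a singleton
      have hIs : I = {a} := by
        apply Set.Subset.antisymm
        · intro x hx
          have := hIcc hx
          rw [← heq, Set.Icc_self] at this
          exact this
        · obtain ⟨x, hx⟩ := hne
          have hxa : x ∈ Icc a b := hIcc hx
          rw [← heq, Set.Icc_self] at hxa
          have : x = a := hxa
          rw [Set.singleton_subset_iff, ← this]
          exact hx
      rw [hIs]
      have := IntervalCEAux.singleton_bound hJ hK haI
      linarith
    · -- main case : a < b
      set ca := if a ∈ I then (1:ℝ) else 0 with hca
      set cb := if b ∈ I then (0:ℝ) else 1 with hcb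
      have hca1 : |ca| ≤ 1 := by rw [hca]; split_ifs <;> norm_num
      have hcb1 : |cb| ≤ 1 := by rw [hcb]; split_ifs <;> norm_num
      have hdec := IntervalCEAux.interval_dec I a b ca cb hlt hca hcb hIcc hIoo
      have int1 := IntervalCEAux.integrable_ind_sub hJ (measurableSet_Ioc : MeasurableSet (Ioc a b))
      have int2 := (IntervalCEAux.integrable_ind_sub hJ (measurableSet_singleton a)).const_mul ca
      have int3 := (IntervalCEAux.integrable_ind_sub hJ (measurableSet_singleton b)).const_mul cb
      have hfun : (fun z : ℝ × ℝ => I.indicator (fun _ => (1:ℝ)) z.1 * (z.2 - z.1))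
          = fun z : ℝ × ℝ => ((Ioc a b).indicator (fun _ => (1:ℝ)) z.1 * (z.2 - z.1)
              + ca * (({a} : Set ℝ).indicator (fun _ => (1:ℝ)) z.1 * (z.2 - z.1)))
              - cb * (({b} : Set ℝ).indicator (fun _ => (1:ℝ)) z.1 * (z.2 - z.1)) := by
        funext z
        rw [hdec z.1]
        ring
      have hIeq : ∫ z : ℝ × ℝ, I.indicator (fun _ => (1:ℝ)) z.1 * (z.2 - z.1) ∂J
          = (∫ z : ℝ × ℝ, (Ioc a b).indicator (fun _ => (1:ℝ)) z.1 * (z.2 - z.1) ∂J)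
            + ca * (∫ z : ℝ × ℝ, ({a} : Set ℝ).indicator (fun _ => (1:ℝ)) z.1 * (z.2 - z.1) ∂J)
            - cb * (∫ z : ℝ × ℝ, ({b} : Set ℝ).indicator (fun _ => (1:ℝ)) z.1 * (z.2 - z.1) ∂J) := by
        have int12 : Integrable (fun z : ℝ × ℝ => (Ioc a b).indicator (fun _ => (1:ℝ)) z.1 * (z.2 - z.1)
            + ca * (({a} : Set ℝ).indicator (fun _ => (1:ℝ)) z.1 * (z.2 - z.1))) J := int1.add int2
        rw [hfun, integral_sub int12 int3, integral_add int1 int2,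
          integral_const_mul, integral_const_mul]
      rw [hIeq]
      have h1 := IntervalCEAux.sum_bound hJ hK ha0 hab hb1
      have h2 := IntervalCEAux.singleton_bound hJ hK haI
      have h3 := IntervalCEAux.singleton_bound hJ hK hbI
      have habs : |(∫ z : ℝ × ℝ, (Ioc a b).indicator (fun _ => (1:ℝ)) z.1 * (z.2 - z.1) ∂J)
            + ca * (∫ z : ℝ × ℝ, ({a} : Set ℝ).indicator (fun _ => (1:ℝ)) z.1 * (z.2 - z.1) ∂J)
            - cb * (∫ z : ℝ × ℝ, ({b} : Set ℝ).indicator (fun _ => (1:ℝ)) z.1 * (z.2 - z.1) ∂J)|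
          ≤ |∫ z : ℝ × ℝ, (Ioc a b).indicator (fun _ => (1:ℝ)) z.1 * (z.2 - z.1) ∂J|
            + |ca| * |∫ z : ℝ × ℝ, ({a} : Set ℝ).indicator (fun _ => (1:ℝ)) z.1 * (z.2 - z.1) ∂J|
            + |cb| * |∫ z : ℝ × ℝ, ({b} : Set ℝ).indicator (fun _ => (1:ℝ)) z.1 * (z.2 - z.1) ∂J| := by
        calc _ ≤ |(∫ z : ℝ × ℝ, (Ioc a b).indicator (fun _ => (1:ℝ)) z.1 * (z.2 - z.1) ∂J)
              + ca * (∫ z : ℝ × ℝ, ({a} : Set ℝ).indicator (fun _ => (1:ℝ)) z.1 * (z.2 - z.1) ∂J)|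
              + |cb * (∫ z : ℝ × ℝ, ({b} : Set ℝ).indicator (fun _ => (1:ℝ)) z.1 * (z.2 - z.1) ∂J)| :=
            abs_sub _ _
          _ ≤ _ := by
            rw [abs_mul]
            have := abs_add_le (∫ z : ℝ × ℝ, (Ioc a b).indicator (fun _ => (1:ℝ)) z.1 * (z.2 - z.1) ∂J)
              (ca * ∫ z : ℝ × ℝ, ({a} : Set ℝ).indicator (fun _ => (1:ℝ)) z.1 * (z.2 - z.1) ∂J)
            rw [abs_mul] at this
            linarith
      have hnn2 : 0 ≤ |∫ z : ℝ × ℝ, ({a} : Set ℝ).indicator (fun _ => (1:ℝ)) z.1 * (z.2 - z.1) ∂J| := abs_nonneg _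
      have hnn3 : 0 ≤ |∫ z : ℝ × ℝ, ({b} : Set ℝ).indicator (fun _ => (1:ℝ)) z.1 * (z.2 - z.1) ∂J| := abs_nonneg _
      have hm2 : |ca| * |∫ z : ℝ × ℝ, ({a} : Set ℝ).indicator (fun _ => (1:ℝ)) z.1 * (z.2 - z.1) ∂J|
          ≤ CDL K J / 2 := by
        calc _ ≤ 1 * |∫ z : ℝ × ℝ, ({a} : Set ℝ).indicator (fun _ => (1:ℝ)) z.1 * (z.2 - z.1) ∂J| :=
              mul_le_mul_of_nonneg_right hca1 hnn2
          _ ≤ CDL K J / 2 := by rw [one_mul]; exact h2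
      have hm3 : |cb| * |∫ z : ℝ × ℝ, ({b} : Set ℝ).indicator (fun _ => (1:ℝ)) z.1 * (z.2 - z.1) ∂J|
          ≤ CDL K J / 2 := by
        calc _ ≤ 1 * |∫ z : ℝ × ℝ, ({b} : Set ℝ).indicator (fun _ => (1:ℝ)) z.1 * (z.2 - z.1) ∂J| :=
              mul_le_mul_of_nonneg_right hcb1 hnn3
          _ ≤ CDL K J / 2 := by rw [one_mul]; exact h3
      linarith
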